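/- Let L : C → D be a reflective localization with fully faithful right adjoint, and suppose L is locally cartesian. Then for any morphism f : X → Z with X, Z ∈ D and any family of objects Y_i over Z indexed by a category I whose colimit Y over Z exists in C and is preserved by pullback along f in C, the objects L(X ×_Z Y_i) compute, via their colimit in D, the object X ×_Z L(Y). -/

import Mathlib

open CategoryTheory CategoryTheory.Limits

variable {C D : Type*} [Category C] [Category D]

/-- Given a localization `L : C ⥤ D` (left adjoint to a fully faithful inclusion
`ι : D ⥤ C`) and a cospan `ι X ⟶ ι Z ⟵ Y` in `C` whose two corners `X` and `Z`
lie in `D`, the canonical comparison map `L (X ×_Z Y) ⟶ X ×_Z (L Y)`, where the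
target is the pullback in `D` of `X ⟶ Z` and the adjoint transpose `L Y ⟶ Z`. -/
noncomputable def localizationPullbackComparison
    [HasPullbacks C] [HasPullbacks D]
    (L : C ⥤ D) (ι : D ⥤ C) [ι.Full] [ι.Faithful] (adj : L ⊣ ι)
    (X Z : D) (Y : C) (f : ι.obj X ⟶ ι.obj Z) (g : Y ⟶ ι.obj Z) :
    L.obj (pullback f g) ⟶ pullback (ι.preimage f) ((adj.homEquiv Y Z).symm g) :=
  pullback.lift (L.map (pullback.fst f g) ≫ adj.counit.app X) (L.map (pullback.snd f g))
    (by
      simp only [Category.assoc, Adjunction.homEquiv_counit]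
      rw [← adj.counit_naturality (ι.preimage f)]
      simp only [Functor.comp_map, Functor.id_obj, Functor.map_preimage]
      rw [← Functor.map_comp_assoc, ← Functor.map_comp_assoc, pullback.condition])

set_option maxHeartbeats 1000000 in
/-- auxiliary adjunction -/
noncomputable def overLocAdj (L : C ⥤ D) (ι : D ⥤ C) (adj : L ⊣ ι) (X : D) :
    (Over.post (X := ι.obj X) L ⋙ Over.map (adj.counit.app X)) ⊣ Over.post ι :=
  Adjunction.mkOfHomEquiv
  { homEquiv := fun p w =>
      { toFun := fun u => Over.homMk (adj.homEquiv _ _ u.left) (by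
          have key : ∀ (a : L.obj p.left ⟶ w.left), a ≫ w.hom = L.map p.hom ≫ adj.counit.app X →
              adj.homEquiv _ _ a ≫ ι.map w.hom = p.hom := by
            intro a hu
            rw [Adjunction.homEquiv_unit, Category.assoc, ← ι.map_comp, hu]
            rw [ι.map_comp, ← Category.assoc]
            have hn := adj.unit.naturality p.hom
            simp only [Functor.id_obj, Functor.id_map, Functor.comp_obj, Functor.comp_map] at hn
            rw [← hn, Category.assoc]; erw [adj.right_triangle_components, Category.comp_id]
          exact key u.left (Over.w u))
        invFun := fun v => Over.homMk ((adj.homEquiv _ _).symm v.left) (by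
          have key : ∀ (b : p.left ⟶ ι.obj w.left), b ≫ ι.map w.hom = p.hom →
              (adj.homEquiv _ _).symm b ≫ w.hom = L.map p.hom ≫ adj.counit.app X := by
            intro b hv
            rw [Adjunction.homEquiv_counit, Category.assoc]
            rw [← hv, L.map_comp, Category.assoc]; erw [adj.counit_naturality]
          exact key v.left (Over.w v))
        left_inv := fun u => by ext; exact Equiv.symm_apply_apply _ _
        right_inv := fun v => by ext; exact Equiv.apply_symm_apply _ _ }
    homEquiv_naturality_left_symm := fun g h => by
      ext
      simp only [Equiv.coe_fn_symm_mk, Over.homMk_left, Over.comp_left]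
      exact adj.homEquiv_naturality_left_symm _ _
    homEquiv_naturality_right := fun g h => by
      ext
      simp only [Equiv.coe_fn_mk, Over.homMk_left, Over.comp_left]
      exact adj.homEquiv_naturality_right _ _ }

/-- Let `L : C ⥤ D` be a reflective localization with fully
faithful right adjoint `ι`, and suppose `L` is locally cartesian.  Given a morphism
`f : ι X ⟶ ι Z` with `X, Z ∈ D` and an `I`-indexed family of objects `Y_i` over `Z`
(a diagram `G : I ⥤ Over (ι Z)`) whose colimit `Y` over `Z` exists in `C` and is
preserved by pullback along `f` in `C`, the objects `L(X ×_Z Y_i)` compute, via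
their colimit in `D`, the object `X ×_Z L Y`. -/
theorem stmt_15 (I : Type*) [Category I]
    [HasPullbacks C] [HasPullbacks D] [HasColimitsOfShape I D]
    (L : C ⥤ D) (ι : D ⥤ C) [ι.Full] [ι.Faithful] (adj : L ⊣ ι)
    (lc : ∀ (X Z : D) (Y : C) (f : ι.obj X ⟶ ι.obj Z) (g : Y ⟶ ι.obj Z),
      IsIso (localizationPullbackComparison L ι adj X Z Y f g))
    (X Z : D) (f : ι.obj X ⟶ ι.obj Z)
    (G : I ⥤ Over (ι.obj Z)) [HasColimit G]
    (pres : PreservesColimit G (Over.pullback f)) :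
    Nonempty
      (colimit (G ⋙ Over.pullback f ⋙ Over.forget (ι.obj X) ⋙ L) ≅
        pullback (ι.preimage f)
          ((adj.homEquiv (colimit G).left Z).symm (colimit G).hom)) := by
  haveI := pres
  let P : Over (ι.obj Z) ⥤ Over (ι.obj X) := Over.pullback f
  let K : Over (ι.obj X) ⥤ Over X := Over.post L ⋙ Over.map (adj.counit.app X)
  have hc1 : IsColimit (P.mapCocone (colimit.cocone G)) :=
    isColimitOfPreserves P (colimit.isColimit G)
  haveI : PreservesColimitsOfSize.{_, _} K :=
    (overLocAdj L ι adj X).leftAdjoint_preservesColimits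
  have hc2 : IsColimit (K.mapCocone (P.mapCocone (colimit.cocone G))) :=
    isColimitOfPreserves K hc1
  have hc3 : IsColimit ((Over.forget X).mapCocone
      (K.mapCocone (P.mapCocone (colimit.cocone G)))) :=
    isColimitOfPreserves (Over.forget X) hc2
  have e : (K ⋙ Over.forget X) ≅ (Over.forget (ι.obj X) ⋙ L) :=
    NatIso.ofComponents (fun p => Iso.refl _) (by intros; exact (Category.comp_id _).trans (Category.id_comp _).symm)
  haveI hcol : HasColimit (((G ⋙ P) ⋙ K) ⋙ Over.forget X) := inferInstance
  have iso1 : colimit (G ⋙ Over.pullback f ⋙ Over.forget (ι.obj X) ⋙ L) ≅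
      L.obj (pullback (colimit G).hom f) :=
    (HasColimit.isoOfNatIso (Functor.isoWhiskerLeft (G ⋙ P) e.symm)) ≪≫
      colimit.isoColimitCocone ⟨_, hc3⟩
  haveI := lc X Z (colimit G).left f (colimit G).hom
  exact ⟨iso1 ≪≫ L.mapIso (pullbackSymmetry (colimit G).hom f) ≪≫
    asIso (localizationPullbackComparison L ι adj X Z (colimit G).left f (colimit G).hom)⟩
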